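/- There exist sequences (a_j), (b_j) of real numbers tending to +∞ and sequences (a′_j), (b′_j) tending to −∞ such that c₁′(a_j) → +∞, c₁′(b_j) → −∞, c₁′(a′_j) → +∞, and c₁′(b′_j) → −∞ as j → ∞. -/

import Mathlib

open Filter

private lemma sqrt_tendsto : Tendsto Real.sqrt atTop atTop := by
  refine tendsto_atTop_atTop.mpr fun b => ⟨b ^ 2, fun a ha => ?_⟩
  calc b ≤ |b| := le_abs_self b
    _ = Real.sqrt (b ^ 2) := (Real.sqrt_sq_eq_abs b).symm
    _ ≤ Real.sqrt a := Real.sqrt_le_sqrt ha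

private lemma growth :
    Tendsto (fun L : ℝ => Real.sqrt L * Real.exp L / (2 * (L + 1))) atTop atTop := by
  have h1 := Real.tendsto_exp_div_pow_atTop 1
  simp only [pow_one] at h1
  have h2 := h1.atTop_div_const (by norm_num : (0:ℝ) < 4)
  refine tendsto_atTop_mono' atTop ?_ h2
  filter_upwards [eventually_ge_atTop (1 : ℝ)] with L hL
  have hL0 : (0:ℝ) < L := by linarith
  have hs : 1 ≤ Real.sqrt L := Real.one_le_sqrt.mpr hL
  have hE : 0 < Real.exp L := Real.exp_pos L
  rw [div_div]
  refine div_le_div₀ (by positivity) ?_ (by linarith) (by linarith)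
  nlinarith

private lemma bdd (x : ℝ) : |x / (x ^ 2 + 1) ^ 2| ≤ 1 := by
  rw [abs_div, abs_of_pos (by positivity : (0:ℝ) < (x ^ 2 + 1) ^ 2)]
  rw [div_le_one (by positivity)]
  have := abs_nonneg x
  nlinarith [sq_abs x, sq_nonneg (|x| - 1), sq_nonneg (x^2)]

private lemma deriv_formula (c₁ : ℝ → ℝ)
    (hc₁ : ∀ x : ℝ, c₁ x = Real.sin x +
      (2 + Real.sin (Real.exp (x ^ 2))) / (4 * (x ^ 2 + 1)))
    (x : ℝ) (hs : Real.sin (Real.exp (x ^ 2)) = 0) :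
    deriv c₁ x = Real.cos x
      + Real.cos (Real.exp (x ^ 2)) * (x * Real.exp (x ^ 2)) / (2 * (x ^ 2 + 1))
      - x / (x ^ 2 + 1) ^ 2 := by
  have hc : c₁ = fun x => Real.sin x +
      (2 + Real.sin (Real.exp (x ^ 2))) / (4 * (x ^ 2 + 1)) := funext hc₁
  subst hc
  have h1 : HasDerivAt (fun y : ℝ => y ^ 2) (2 * x) x := by
    simpa using hasDerivAt_pow 2 x
  have h2 : HasDerivAt (fun y : ℝ => Real.exp (y ^ 2))
      (Real.exp (x ^ 2) * (2 * x)) x := h1.exp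
  have h3 := h2.sin
  have h4 : HasDerivAt (fun y : ℝ => 2 + Real.sin (Real.exp (y ^ 2)))
      (Real.cos (Real.exp (x ^ 2)) * (Real.exp (x ^ 2) * (2 * x))) x := by
    exact h3.const_add 2
  have h5 : HasDerivAt (fun y : ℝ => 4 * (y ^ 2 + 1)) (4 * (2 * x)) x :=
    (h1.add_const 1).const_mul 4
  have hd : (4 * (x ^ 2 + 1)) ≠ 0 := by positivity
  have h6 : HasDerivAt (fun y => Real.sin y + (2 + Real.sin (Real.exp (y ^ 2))) / (4 * (y ^ 2 + 1))) _ x :=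
    (Real.hasDerivAt_sin x).add (h4.div h5 hd)
  rw [h6.deriv, hs]
  have h7 : (x ^ 2 + 1) ≠ 0 := by positivity
  field_simp
  ring

private lemma deriv_val (c₁ : ℝ → ℝ)
    (hc₁ : ∀ x : ℝ, c₁ x = Real.sin x +
      (2 + Real.sin (Real.exp (x ^ 2))) / (4 * (x ^ 2 + 1)))
    (x v ε : ℝ) (hv : 0 < v) (hx2 : x ^ 2 = Real.log v)
    (hs : Real.sin v = 0) (hco : Real.cos v = ε) :
    deriv c₁ x = Real.cos x + ε * (x * v) / (2 * (x ^ 2 + 1)) - x / (x ^ 2 + 1) ^ 2 := by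
  have he : Real.exp (x ^ 2) = v := by rw [hx2, Real.exp_log hv]
  rw [deriv_formula c₁ hc₁ x (by rw [he]; exact hs), he, hco]

private lemma comb_top (f T r : ℕ → ℝ) (hf : ∀ j, T j - 2 ≤ f j)
    (hT : Tendsto T atTop atTop) : Tendsto f atTop atTop :=
  tendsto_atTop_mono hf (tendsto_atTop_add_const_right atTop (-2) hT)

private lemma comb_bot (f T r : ℕ → ℝ) (hf : ∀ j, f j ≤ -(T j) + 2)
    (hT : Tendsto T atTop atTop) : Tendsto f atTop atBot := by
  refine tendsto_atBot_mono hf (tendsto_atBot_add_const_right atTop 2 ?_)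
  exact tendsto_neg_atBot_iff.mpr hT |>.congr (fun x => rfl)

theorem stmt17 (c₁ : ℝ → ℝ)
    (hc₁ : ∀ x : ℝ, c₁ x = Real.sin x +
      (2 + Real.sin (Real.exp (x ^ 2))) / (4 * (x ^ 2 + 1))) :
    ∃ a b a' b' : ℕ → ℝ,
      Tendsto a atTop atTop ∧ Tendsto b atTop atTop ∧
      Tendsto a' atTop atBot ∧ Tendsto b' atTop atBot ∧
      Tendsto (fun j => deriv c₁ (a j)) atTop atTop ∧
      Tendsto (fun j => deriv c₁ (b j)) atTop atBot ∧
      Tendsto (fun j => deriv c₁ (a' j)) atTop atTop ∧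
      Tendsto (fun j => deriv c₁ (b' j)) atTop atBot := by
  set π := Real.pi
  -- the two driving sequences of "resonance" values
  set v₁ : ℕ → ℝ := fun j => (j + 1 : ℕ) * (2 * π) with hv₁
  set v₂ : ℕ → ℝ := fun j => (j + 1 : ℕ) * (2 * π) + π with hv₂
  have hπ : (0:ℝ) < π := Real.pi_pos
  have hv₁pos : ∀ j, (1:ℝ) ≤ v₁ j := by
    intro j
    have : (1:ℝ) ≤ (j+1 : ℕ) := by exact_mod_cast Nat.one_le_iff_ne_zero.mpr (by omega)
    simp only [hv₁]
    nlinarith [Real.pi_gt_three, this]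
  have hv₂pos : ∀ j, (1:ℝ) ≤ v₂ j := fun j => by
    have h : v₂ j = v₁ j + π := rfl
    linarith [hv₁pos j, hπ]
  have hv₁top : Tendsto v₁ atTop atTop := by
    apply Tendsto.atTop_mul_const (by linarith : (0:ℝ) < 2 * π)
    exact tendsto_natCast_atTop_atTop.comp (tendsto_add_atTop_nat 1)
  have hv₂top : Tendsto v₂ atTop atTop := tendsto_atTop_add_const_right atTop π hv₁top
  have hs₁ : ∀ j, Real.sin (v₁ j) = 0 := by
    intro j
    have := Real.sin_nat_mul_pi (2 * (j + 1))
    simpa [hv₁, mul_assoc, mul_comm, mul_left_comm, Nat.cast_mul] using this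
  have hs₂ : ∀ j, Real.sin (v₂ j) = 0 := by
    intro j
    have := Real.sin_nat_mul_pi (2 * (j + 1) + 1)
    have h : ((2 * (j + 1) + 1 : ℕ) : ℝ) * π = v₂ j := by push_cast [hv₂]; ring
    rwa [h] at this
  have hc₁' : ∀ j, Real.cos (v₁ j) = 1 := fun j => Real.cos_nat_mul_two_pi (j + 1)
  have hc₂' : ∀ j, Real.cos (v₂ j) = -1 := fun j => Real.cos_nat_mul_two_pi_add_pi (j + 1)
  -- the points
  set q₁ : ℕ → ℝ := fun j => Real.sqrt (Real.log (v₁ j)) with hq₁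
  set q₂ : ℕ → ℝ := fun j => Real.sqrt (Real.log (v₂ j)) with hq₂
  have hq₁sq : ∀ j, (q₁ j) ^ 2 = Real.log (v₁ j) := fun j =>
    Real.sq_sqrt (Real.log_nonneg (hv₁pos j))
  have hq₂sq : ∀ j, (q₂ j) ^ 2 = Real.log (v₂ j) := fun j =>
    Real.sq_sqrt (Real.log_nonneg (hv₂pos j))
  have hq₁top : Tendsto q₁ atTop atTop :=
    sqrt_tendsto.comp (Real.tendsto_log_atTop.comp hv₁top)
  have hq₂top : Tendsto q₂ atTop atTop :=
    sqrt_tendsto.comp (Real.tendsto_log_atTop.comp hv₂top)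
  -- main growing terms
  set T₁ : ℕ → ℝ := fun j => q₁ j * v₁ j / (2 * ((q₁ j) ^ 2 + 1)) with hT₁
  set T₂ : ℕ → ℝ := fun j => q₂ j * v₂ j / (2 * ((q₂ j) ^ 2 + 1)) with hT₂
  have hT₁top : Tendsto T₁ atTop atTop := by
    have := growth.comp (Real.tendsto_log_atTop.comp hv₁top)
    refine this.congr fun j => ?_
    simp only [Function.comp_apply, hT₁, hq₁, hq₁sq j]
    rw [Real.exp_log (by linarith [hv₁pos j])]
    rw [Real.sq_sqrt (Real.log_nonneg (hv₁pos j))]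
  have hT₂top : Tendsto T₂ atTop atTop := by
    have := growth.comp (Real.tendsto_log_atTop.comp hv₂top)
    refine this.congr fun j => ?_
    simp only [Function.comp_apply, hT₂, hq₂, hq₂sq j]
    rw [Real.exp_log (by linarith [hv₂pos j])]
    rw [Real.sq_sqrt (Real.log_nonneg (hv₂pos j))]
  refine ⟨q₁, q₂, fun j => -(q₂ j), fun j => -(q₁ j), hq₁top, hq₂top,
    tendsto_neg_atBot_iff.mpr hq₂top, tendsto_neg_atBot_iff.mpr hq₁top, ?_, ?_, ?_, ?_⟩
  · -- a : deriv at q₁, cos = 1, x > 0 → atTop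
    refine comb_top _ T₁ (fun _ => 0) (fun j => ?_) hT₁top
    rw [deriv_val c₁ hc₁ (q₁ j) (v₁ j) 1 (by linarith [hv₁pos j]) (hq₁sq j) (hs₁ j) (hc₁' j)]
    have h1 := Real.neg_one_le_cos (q₁ j)
    have h2 := bdd (q₁ j)
    have h3 := abs_le.mp h2
    simp only [one_mul]
    linarith [h3.1, h3.2]
  · -- b : deriv at q₂, cos = -1, x > 0 → atBot
    refine comb_bot _ T₂ (fun _ => 0) (fun j => ?_) hT₂top
    rw [deriv_val c₁ hc₁ (q₂ j) (v₂ j) (-1) (by linarith [hv₂pos j]) (hq₂sq j) (hs₂ j) (hc₂' j)]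
    have h1 := Real.cos_le_one (q₂ j)
    have h3 := abs_le.mp (bdd (q₂ j))
    have : (-1 : ℝ) * (q₂ j * v₂ j) / (2 * ((q₂ j) ^ 2 + 1)) = -(T₂ j) := by
      rw [hT₂]; ring
    rw [this]
    linarith [h3.1, h3.2]
  · -- a' : deriv at -q₂, cos = -1 → atTop
    refine comb_top _ T₂ (fun _ => 0) (fun j => ?_) hT₂top
    have hsq : (-(q₂ j)) ^ 2 = Real.log (v₂ j) := by rw [neg_sq]; exact hq₂sq j
    rw [deriv_val c₁ hc₁ (-(q₂ j)) (v₂ j) (-1) (by linarith [hv₂pos j]) hsq (hs₂ j) (hc₂' j)]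
    have h1 := Real.neg_one_le_cos (-(q₂ j))
    have h3 := abs_le.mp (bdd (-(q₂ j)))
    have e1 : (-1 : ℝ) * (-(q₂ j) * v₂ j) / (2 * ((-(q₂ j)) ^ 2 + 1)) = T₂ j := by
      rw [hT₂]; ring_nf
    rw [e1]
    linarith [h3.1, h3.2]
  · -- b' : deriv at -q₁, cos = 1 → atBot
    refine comb_bot _ T₁ (fun _ => 0) (fun j => ?_) hT₁top
    have hsq : (-(q₁ j)) ^ 2 = Real.log (v₁ j) := by rw [neg_sq]; exact hq₁sq j
    rw [deriv_val c₁ hc₁ (-(q₁ j)) (v₁ j) 1 (by linarith [hv₁pos j]) hsq (hs₁ j) (hc₁' j)]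
    have h1 := Real.cos_le_one (-(q₁ j))
    have h3 := abs_le.mp (bdd (-(q₁ j)))
    have e1 : (1 : ℝ) * (-(q₁ j) * v₁ j) / (2 * ((-(q₁ j)) ^ 2 + 1)) = -(T₁ j) := by
      rw [hT₁]; ring_nf
    rw [e1]
    linarith [h3.1, h3.2]
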